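/- The complete first-order theory of the shift graph Sh_2(ℕ), viewed as a structure in the language of graphs, is unstable: there exists a first-order formula φ(x̄, ȳ) in the language of graphs (with x̄, ȳ finite tuples of variables) such that for every k < ω there are tuples ā_0,…,ā_{k−1}, b̄_0,…,b̄_{k−1} of vertices of Sh_2(ℕ) with Sh_2(ℕ) ⊨ φ(ā_i, b̄_j) if and only if i < j. -/

import Mathlib

open Cardinal

/-- `t` is the shift of `s`: `s_i = t_{i-1}` for all `1 ≤ i ≤ r-1`. -/
def IsShiftOf {A : Type} {r : ℕ} (s t : Fin r → A) : Prop :=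
  ∀ (i : ℕ) (h : i + 1 < r), s ⟨i + 1, h⟩ = t ⟨i, Nat.lt_of_succ_lt h⟩

/-- The shift graph `Sh_r(A)` on a linear order `A`: vertices are strictly increasing
`r`-tuples from `A`, and distinct vertices `s, t` are adjacent iff one is the shift
of the other. -/
def ShiftGraph (A : Type) [LinearOrder A] (r : ℕ) :
    SimpleGraph {s : Fin r → A // StrictMono s} where
  Adj s t := s ≠ t ∧ (IsShiftOf s.1 t.1 ∨ IsShiftOf t.1 s.1)
  symm := by
    constructor
    rintro s t ⟨hne, h⟩
    exact ⟨hne.symm, h.symm⟩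
  loopless := by
    constructor
    rintro s ⟨hne, -⟩
    exact hne rfl

/-- The symmetric shift graph `Sh_r^sym(A)` on a set `A`: vertices are `r`-tuples of
pairwise distinct elements of `A`, and distinct vertices `s, t` are adjacent iff one
is the shift of the other. -/
def SymShiftGraph (A : Type) (r : ℕ) :
    SimpleGraph {s : Fin r → A // Function.Injective s} where
  Adj s t := s ≠ t ∧ (IsShiftOf s.1 t.1 ∨ IsShiftOf t.1 s.1)
  symm := by
    constructor
    rintro s t ⟨hne, h⟩
    exact ⟨hne.symm, h.symm⟩
  loopless := by
    constructor
    rintro s ⟨hne, -⟩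
    exact hne rfl

open FirstOrder FirstOrder.Language

abbrev Vtx := {s : Fin 2 → ℕ // StrictMono s}

lemma isShiftOf_two (s t : Fin 2 → ℕ) : IsShiftOf s t ↔ s 1 = t 0 := by
  constructor
  · intro h; exact h 0 one_lt_two
  · intro h i hi
    have : i = 0 := by omega
    subst this; exact h

lemma shift2_adj (s t : Vtx) :
    (ShiftGraph ℕ 2).Adj s t ↔ s.1 ≠ t.1 ∧ (s.1 1 = t.1 0 ∨ t.1 1 = s.1 0) := by
  show (s ≠ t ∧ _) ↔ _
  rw [isShiftOf_two, isShiftOf_two, ne_eq, Subtype.ext_iff]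

def mkV (m n : ℕ) (h : m < n) : Vtx :=
  ⟨![m, n], by
    intro i j hij
    fin_cases i <;> fin_cases j <;> simp_all⟩

@[simp] lemma mkV_zero (m n : ℕ) (h : m < n) : (mkV m n h).1 0 = m := rfl
@[simp] lemma mkV_one (m n : ℕ) (h : m < n) : (mkV m n h).1 1 = n := rfl

def phi : Language.graph.Formula (Fin 2 ⊕ Fin 2) :=
  BoundedFormula.ex
    ((adj.boundedFormula₂ (Term.var (Sum.inl (Sum.inl 0))) (Term.var (Sum.inr 0))) ⊓
     (adj.boundedFormula₂ (Term.var (Sum.inr 0)) (Term.var (Sum.inl (Sum.inr 0)))) ⊓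
     (adj.boundedFormula₂ (Term.var (Sum.inr 0)) (Term.var (Sum.inl (Sum.inr 1)))) ⊓
     ∼(adj.boundedFormula₂ (Term.var (Sum.inr 0)) (Term.var (Sum.inl (Sum.inl 1)))))

lemma relMap_adj (u w : Vtx) :
    @Structure.RelMap Language.graph Vtx (ShiftGraph ℕ 2).structure 2 adj ![u, w] ↔
      (ShiftGraph ℕ 2).Adj u w := Iff.rfl

lemma snoc_zero (z : Vtx) : (Fin.snoc (default : Fin 0 → Vtx) z : Fin 1 → Vtx) 0 = z := by
  simp [Fin.snoc]

lemma realize_phi (v : Fin 2 ⊕ Fin 2 → Vtx) :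
    (@Formula.Realize Language.graph Vtx (ShiftGraph ℕ 2).structure _ phi v) ↔
    ∃ z : Vtx, (ShiftGraph ℕ 2).Adj (v (Sum.inl 0)) z ∧
      (ShiftGraph ℕ 2).Adj z (v (Sum.inr 0)) ∧
      (ShiftGraph ℕ 2).Adj z (v (Sum.inr 1)) ∧
      ¬ (ShiftGraph ℕ 2).Adj z (v (Sum.inl 1)) := by
  letI := (ShiftGraph ℕ 2).structure
  simp only [phi, Formula.Realize, BoundedFormula.realize_ex, BoundedFormula.realize_inf,
    BoundedFormula.realize_not, BoundedFormula.realize_rel₂, Term.realize_var, Sum.elim_inl,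
    Sum.elim_inr, relMap_adj, snoc_zero]
  tauto

theorem stmt_9 :
    ∃ (p q : ℕ) (φ : Language.graph.Formula (Fin p ⊕ Fin q)),
      ∀ k : ℕ,
        ∃ (a : Fin k → Fin p → {s : Fin 2 → ℕ // StrictMono s})
          (b : Fin k → Fin q → {s : Fin 2 → ℕ // StrictMono s}),
          ∀ i j : Fin k,
            (@Formula.Realize Language.graph {s : Fin 2 → ℕ // StrictMono s}
              (ShiftGraph ℕ 2).structure _ φ (Sum.elim (a i) (b j))) ↔ i < j := by
  refine ⟨2, 2, phi, fun k => ?_⟩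
  refine ⟨fun i => ![mkV (4*i) (4*i+1) (by omega), mkV (4*i+2) (4*i+3) (by omega)],
          fun j => ![mkV (4*j+2) (4*j+3) (by omega),
                     mkV (4*j+2) (4*k+10) (by omega)], fun i j => ?_⟩
  rw [realize_phi]
  simp only [Sum.elim_inl, Sum.elim_inr, Matrix.cons_val_zero, Matrix.cons_val_one,
    Matrix.head_cons]
  constructor
  · rintro ⟨z, h1, h2, h3, h4⟩
    have hz : z.1 0 < z.1 1 := z.2 (by decide : (0 : Fin 2) < 1)
    rw [shift2_adj] at h1 h2 h3
    simp only [mkV_zero, mkV_one] at h1 h2 h3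
    obtain ⟨-, e1⟩ := h1
    obtain ⟨-, e2⟩ := h2
    obtain ⟨-, e3⟩ := h3
    have hj : (j : ℕ) < k := j.2
    have hle : (i : ℕ) ≤ (j : ℕ) ∧ z.1 0 = 4*i+1 ∧ z.1 1 = 4*j+2 := by omega
    obtain ⟨hle, hc, hd⟩ := hle
    rw [Fin.lt_def]
    rcases Nat.lt_or_ge (i : ℕ) (j : ℕ) with h | h
    · exact h
    · exfalso
      have hij : (i : ℕ) = (j : ℕ) := le_antisymm hle h
      apply h4
      rw [shift2_adj]
      refine ⟨?_, Or.inl (by simp only [mkV_zero]; omega)⟩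
      intro he
      have := congrFun he 1
      simp only [mkV_one] at this
      omega
  · intro hij
    rw [Fin.lt_def] at hij
    refine ⟨mkV (4*i+1) (4*j+2) (by omega), ?_, ?_, ?_, ?_⟩
    · rw [shift2_adj]
      refine ⟨?_, Or.inl (by simp)⟩
      intro he
      have := congrFun he 0
      simp only [mkV_zero] at this
      omega
    · rw [shift2_adj]
      refine ⟨?_, Or.inl (by simp)⟩
      intro he
      have := congrFun he 0
      simp only [mkV_zero] at this
      omega
    · rw [shift2_adj]
      refine ⟨?_, Or.inl (by simp)⟩
      intro he
      have := congrFun he 0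
      simp only [mkV_zero] at this
      omega
    · rw [shift2_adj]
      rintro ⟨-, h | h⟩ <;> simp only [mkV_zero, mkV_one] at h <;> omega
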